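/- Let A be an m×n real matrix with singular value decomposition A = UΣV*, and let Ṽ ∈ ℝ^{n×r} and Ũ ∈ ℝ^{m×r} be orthonormal matrices whose columns span exactly the leading r-dimensional right and left singular subspaces of A (i.e., the column spaces of the first r columns of V and U, respectively), where σ_r(A) > 0. Then the generalized Nyström approximation recovers the leading singular values exactly: σ_i(AṼ(Ũ*AṼ)†Ũ*A) = σ_i(A) for all i = 1,…,r. -/

import Mathlib

open Matrix

theorem Matrix.isHermitian_transpose_mul_self {m n α : Type*} [Fintype m] [CommSemiring α]
    [StarRing α] [TrivialStar α] (A : Matrix m n α) : (Aᵀ * A).IsHermitian := by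
  rw [IsHermitian, conjTranspose_eq_transpose_of_trivial, transpose_mul, transpose_transpose]

/-- The tuple `f` sorted in nonincreasing order. -/
noncomputable def sortedDesc {α : Type*} [Fintype α] (f : α → ℝ) :
    Fin (Fintype.card α) → ℝ := fun i =>
  let g : Fin (Fintype.card α) → ℝ := f ∘ (Fintype.equivFin α).symm
  g (Tuple.sort g i.rev)

/-- Singular values of a real matrix, in nonincreasing order (generic index types). -/
noncomputable def sVals {m n : Type*} [Fintype m] [Fintype n] [DecidableEq n]
    (M : Matrix m n ℝ) : Fin (Fintype.card n) → ℝ :=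
  sortedDesc fun j => Real.sqrt ((Matrix.isHermitian_transpose_mul_self M).eigenvalues j)

/-- Singular values of a real `Fin m × Fin n` matrix, in nonincreasing order,
`singularValues M 0` being the largest. -/
noncomputable def singularValues {m n : ℕ} (M : Matrix (Fin m) (Fin n) ℝ) :
    Fin n → ℝ := fun i =>
  let g : Fin n → ℝ := fun j =>
    Real.sqrt ((Matrix.isHermitian_transpose_mul_self M).eigenvalues j)
  g (Tuple.sort g i.rev)

/-- The spectral (operator 2-)norm of a real matrix. -/
noncomputable def specNorm {m n : Type*} [Fintype m] [Fintype n] [DecidableEq n]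
    (M : Matrix m n ℝ) : ℝ :=
  ‖LinearMap.toContinuousLinearMap (Matrix.toEuclideanLin M)‖

/-- The Moore-Penrose pseudoinverse of a real matrix, defined via the Tikhonov
regularization limit of `(AᵀA + εI)⁻¹Aᵀ` as `ε` tends to `0` from above. -/
noncomputable def pinv {m n : Type*} [Fintype m] [Fintype n] [DecidableEq n]
    (A : Matrix m n ℝ) : Matrix n m ℝ :=
  Filter.limUnder (nhdsWithin 0 (Set.Ioi 0)) fun ε : ℝ => (Aᵀ * A + ε • 1)⁻¹ * Aᵀ

/-! ### Auxiliary lemmas -/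

section Aux

open Polynomial

lemma pinv_of_isUnit {k : Type*} [Fintype k] [DecidableEq k] (B : Matrix k k ℝ)
    (hB : IsUnit B.det) : pinv B = B⁻¹ := by
  have hBt : IsUnit Bᵀ.det := by rwa [det_transpose]
  have hBtB : IsUnit (Bᵀ * B).det := by rw [det_mul]; exact hBt.mul hB
  have hcont : ContinuousAt Inv.inv (Bᵀ * B) :=
    continuousAt_matrix_inv _ (NormedRing.inverse_continuousAt hBtB.unit)
  have h1 : Filter.Tendsto (fun ε : ℝ => Bᵀ * B + ε • (1 : Matrix k k ℝ))
      (nhdsWithin 0 (Set.Ioi 0)) (nhds (Bᵀ * B)) := by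
    have : Continuous (fun ε : ℝ => Bᵀ * B + ε • (1 : Matrix k k ℝ)) := by
      continuity
    have := this.tendsto 0
    simpa using this.mono_left nhdsWithin_le_nhds
  have h2 : Filter.Tendsto (fun ε : ℝ => (Bᵀ * B + ε • (1 : Matrix k k ℝ))⁻¹ * Bᵀ)
      (nhdsWithin 0 (Set.Ioi 0)) (nhds ((Bᵀ * B)⁻¹ * Bᵀ)) :=
    ((hcont.tendsto.comp h1).mul tendsto_const_nhds)
  have hlim : pinv B = (Bᵀ * B)⁻¹ * Bᵀ := h2.limUnder_eq
  rw [hlim, Matrix.mul_inv_rev, mul_assoc, Matrix.nonsing_inv_mul _ hBt, mul_one]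

lemma charpoly_conj {k : Type*} [Fintype k] [DecidableEq k]
    (P M : Matrix k k ℝ) (hP : IsUnit P.det) :
    (P * M * P⁻¹).charpoly = M.charpoly := by
  let C' : Matrix k k ℝ →+* Matrix k k ℝ[X] := (RingHom.mapMatrix (C : ℝ →+* ℝ[X]))
  have h1 : C' P * C' P⁻¹ = 1 := by
    rw [← RingHom.map_mul, Matrix.mul_nonsing_inv _ hP, RingHom.map_one]
  have hc : C' P * Matrix.scalar k (X : ℝ[X]) = Matrix.scalar k X * C' P := by
    ext i j
    simp [Matrix.scalar, mul_diagonal, diagonal_mul, mul_comm]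
  have key : charmatrix (P * M * P⁻¹) = C' P * charmatrix M * C' P⁻¹ := by
    have : C' P * (Matrix.scalar k (X : ℝ[X]) - C' M) * C' P⁻¹
        = Matrix.scalar k X - C' (P * M * P⁻¹) := by
      rw [mul_sub, sub_mul, hc, mul_assoc (Matrix.scalar k X), h1, mul_one,
        ← RingHom.map_mul, ← RingHom.map_mul]
    rw [charmatrix, charmatrix, ← this]
  have h1' : C' P⁻¹ * C' P = 1 := by
    rw [← RingHom.map_mul, Matrix.nonsing_inv_mul _ hP, RingHom.map_one]
  show (charmatrix (P * M * P⁻¹)).det = (charmatrix M).det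
  rw [key, det_mul, det_mul, mul_comm, ← mul_assoc, ← det_mul, h1', det_one, one_mul]

lemma charpoly_diagonal {k : Type*} [Fintype k] [DecidableEq k] [LinearOrder k] (d : k → ℝ) :
    (Matrix.diagonal d).charpoly = ∏ i : k, (X - C (d i)) := by
  rw [Matrix.charpoly_of_upperTriangular _ (Matrix.blockTriangular_diagonal d)]
  simp

lemma charpoly_conj' {k : Type*} [Fintype k] [DecidableEq k]
    (W M : Matrix k k ℝ) (hW : W * Wᵀ = 1) :
    (W * M * Wᵀ).charpoly = M.charpoly := by
  have hdet : IsUnit W.det := Matrix.isUnit_det_of_right_inverse hW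
  have hinv : W⁻¹ = Wᵀ := Matrix.inv_eq_right_inv hW
  rw [← hinv]
  exact charpoly_conj W M hdet

lemma eigenvalues_multiset {k : Type*} [Fintype k] [DecidableEq k] [LinearOrder k]
    {H : Matrix k k ℝ} (hH : H.IsHermitian) (W : Matrix k k ℝ) (d : k → ℝ)
    (hW : W * Wᵀ = 1) (hHW : H = W * Matrix.diagonal d * Wᵀ) :
    Multiset.map hH.eigenvalues Finset.univ.val = Multiset.map d Finset.univ.val := by
  have c1 : H.charpoly = (Matrix.diagonal d).charpoly := by
    rw [hHW]; exact charpoly_conj' W _ hW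
  have c2 : H.charpoly = (Matrix.diagonal hH.eigenvalues).charpoly := by
    have hspec := hH.spectral_theorem
    have hmem : (hH.eigenvectorUnitary : Matrix k k ℝ) *
        (hH.eigenvectorUnitary : Matrix k k ℝ)ᵀ = 1 := by
      have := (Matrix.mem_unitaryGroup_iff).mp hH.eigenvectorUnitary.2
      rwa [star_eq_conjTranspose, conjTranspose_eq_transpose_of_trivial] at this
    have hd : Matrix.diagonal (RCLike.ofReal ∘ hH.eigenvalues) = Matrix.diagonal hH.eigenvalues := by
      rw [RCLike.ofReal_real_eq_id]; rfl
    rw [Unitary.conjStarAlgAut_apply, star_eq_conjTranspose, conjTranspose_eq_transpose_of_trivial, hd] at hspec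
    conv_lhs => rw [hspec]
    exact charpoly_conj' _ _ hmem
  have hpoly : ∏ i : k, (X - C (hH.eigenvalues i)) = ∏ i : k, (X - C (d i)) := by
    rw [← _root_.charpoly_diagonal, ← _root_.charpoly_diagonal, ← c1, ← c2]
  calc Multiset.map hH.eigenvalues Finset.univ.val
      = ((Multiset.map hH.eigenvalues Finset.univ.val).map fun a => X - C a).prod.roots :=
        (Polynomial.roots_multiset_prod_X_sub_C _).symm
    _ = ((Multiset.map d Finset.univ.val).map fun a => X - C a).prod.roots := by
        rw [Multiset.map_map, Multiset.map_map]
        exact congrArg Polynomial.roots hpoly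
    _ = Multiset.map d Finset.univ.val := Polynomial.roots_multiset_prod_X_sub_C _

lemma sort_eq_of_multiset_eq {k : ℕ} (f g : Fin k → ℝ)
    (h : (List.ofFn f : Multiset ℝ) = (List.ofFn g : Multiset ℝ)) :
    f ∘ Tuple.sort f = g ∘ Tuple.sort g := by
  have hs1 : List.Pairwise (· ≤ ·) (List.ofFn (f ∘ Tuple.sort f)) :=
    List.pairwise_ofFn.mpr fun _ _ h => Tuple.monotone_sort f h.le
  have hs2 : List.Pairwise (· ≤ ·) (List.ofFn (g ∘ Tuple.sort g)) :=
    List.pairwise_ofFn.mpr fun _ _ h => Tuple.monotone_sort g h.le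
  have hp : List.Perm (List.ofFn (f ∘ Tuple.sort f)) (List.ofFn (g ∘ Tuple.sort g)) :=
    ((Tuple.sort f).ofFn_comp_perm f).trans
      ((Multiset.coe_eq_coe.mp h).trans ((Tuple.sort g).ofFn_comp_perm g).symm)
  exact List.ofFn_injective (List.Perm.eq_of_pairwise' hs1 hs2 hp)

lemma multiset_ofFn_eq_map {k : ℕ} (f : Fin k → ℝ) :
    (List.ofFn f : Multiset ℝ) = Multiset.map f Finset.univ.val := by
  rw [List.ofFn_eq_map]
  rfl

lemma sort_antitone {k : ℕ} (f : Fin k → ℝ) (hf : Antitone f) (i : Fin k) :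
    f (Tuple.sort f i.rev) = f i := by
  have h : f ∘ (Fin.revPerm : Equiv.Perm (Fin k)) = f ∘ Tuple.sort f := by
    rw [Tuple.comp_sort_eq_comp_iff_monotone]
    intro a b hab
    exact hf (by simpa using hab)
  have := congrFun h.symm i.rev
  simpa using this

lemma singularValues_antitone {m n : ℕ} (M : Matrix (Fin m) (Fin n) ℝ) :
    Antitone (singularValues M) := by
  intro a b hab
  exact Tuple.monotone_sort
    (fun j => Real.sqrt ((Matrix.isHermitian_transpose_mul_self M).eigenvalues j))
    (Fin.rev_le_rev.mpr hab)

lemma singularValues_nonneg {m n : ℕ} (M : Matrix (Fin m) (Fin n) ℝ) (i : Fin n) :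
    0 ≤ singularValues M i :=
  Real.sqrt_nonneg _

section F
variable {r n : ℕ} (hrn : r ≤ n)

/-- The `n × r` matrix of the first `r` columns of the identity. -/
noncomputable def Fm (hrn : r ≤ n) : Matrix (Fin n) (Fin r) ℝ :=
  (1 : Matrix (Fin n) (Fin n) ℝ).submatrix id (Fin.castLE hrn)

lemma mul_Fm {m' : Type*} [Fintype m'] (M : Matrix m' (Fin n) ℝ) :
    M * Fm hrn = M.submatrix id (Fin.castLE hrn) := by
  ext i j
  simp [Fm, Matrix.mul_apply, Matrix.one_apply, Finset.sum_ite_eq']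

lemma Fm_transpose : (Fm hrn)ᵀ = (1 : Matrix (Fin n) (Fin n) ℝ).submatrix (Fin.castLE hrn) id := by
  rw [Fm, transpose_submatrix, transpose_one]

lemma Fmt_mul {m' : Type*} [Fintype m'] (M : Matrix (Fin n) m' ℝ) :
    (Fm hrn)ᵀ * M = M.submatrix (Fin.castLE hrn) id := by
  ext i j
  simp [Fm_transpose, Matrix.mul_apply, Matrix.one_apply, Finset.sum_ite_eq]

lemma Fmt_mul_Fm : (Fm hrn)ᵀ * Fm hrn = 1 := by
  rw [Fmt_mul, Fm, submatrix_submatrix]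
  simpa using Matrix.submatrix_one (α := ℝ) (Fin.castLE hrn) (Fin.castLE_injective hrn)

lemma diagonal_mul_Fm (d : Fin n → ℝ) :
    Matrix.diagonal d * Fm hrn = Fm hrn * Matrix.diagonal (d ∘ Fin.castLE hrn) := by
  ext i j
  by_cases h : i = Fin.castLE hrn j <;>
    simp [Fm, Matrix.mul_apply, Matrix.one_apply, Matrix.diagonal_apply, h, Finset.sum_ite_eq,
      Finset.sum_ite_eq', eq_comm]

lemma Fm_mul_Fmt : Fm hrn * (Fm hrn)ᵀ
    = Matrix.diagonal (fun i : Fin n => if (i : ℕ) < r then (1:ℝ) else 0) := by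
  ext i j
  rw [Matrix.mul_apply]
  simp only [Fm, transpose_apply, submatrix_apply, id_eq, Matrix.one_apply]
  by_cases h : i = j
  · subst h
    by_cases hi : (i : ℕ) < r
    · rw [Finset.sum_eq_single ⟨(i:ℕ), hi⟩]
      · simp [Fin.ext_iff, hi]
      · intro b _ hb
        rw [if_neg (show ¬(i = Fin.castLE hrn b) from
          fun hc => hb (by simpa [Fin.ext_iff] using hc.symm)), zero_mul]
      · simp
    · rw [Finset.sum_eq_zero, diagonal_apply_eq, if_neg hi]
      intro b _
      have hni : ¬(i = Fin.castLE hrn b) := by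
        intro hc
        have hb' : ((Fin.castLE hrn b : Fin n) : ℕ) < r := by simpa using b.isLt
        exact hi (hc ▸ hb')
      rw [if_neg hni, zero_mul]
  · rw [diagonal_apply_ne _ h, Finset.sum_eq_zero]
    intro b _
    by_cases hib : i = Fin.castLE hrn b
    · rw [if_neg (show ¬(j = Fin.castLE hrn b) from fun hc => h (hib.trans hc.symm)), mul_zero]
    · rw [if_neg hib, zero_mul]

end F

lemma eq_of_mulVec_eq {a b : Type*} [Fintype b] [DecidableEq b] {M N : Matrix a b ℝ}
    (h : ∀ v, M *ᵥ v = N *ᵥ v) : M = N := by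
  ext i j
  have := congrFun (h (Pi.single j 1)) i
  simpa [Matrix.mulVec_single] using this

end Aux

/-- If the columns of the orthonormal matrices `Ṽ` and `Ũ` span exactly the leading
`r`-dimensional right and left singular subspaces of `A` (with `σ_r(A) > 0`), then
the generalized Nyström approximation recovers the leading `r` singular values
exactly: `σ_i(AṼ(Ũ*AṼ)†Ũ*A) = σ_i(A)` for `i = 1, …, r`. -/
theorem generalized_nystrom_exact_on_exact_subspaces
    (m n r : ℕ) (hr : 0 < r) (hrn : r ≤ n)
    (A : Matrix (Fin m) (Fin n) ℝ)
    (U : Matrix (Fin m) (Fin n) ℝ) (V : Matrix (Fin n) (Fin n) ℝ)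
    (hU : Uᵀ * U = 1) (hV : Vᵀ * V = 1) (hV' : V * Vᵀ = 1)
    (hSVD : A = U * Matrix.diagonal (fun i => singularValues A i) * Vᵀ)
    (tV : Matrix (Fin n) (Fin r) ℝ) (tU : Matrix (Fin m) (Fin r) ℝ)
    (htV : tVᵀ * tV = 1) (htU : tUᵀ * tU = 1)
    (hspanV : LinearMap.range tV.mulVecLin =
      LinearMap.range (V.submatrix id (Fin.castLE hrn)).mulVecLin)
    (hspanU : LinearMap.range tU.mulVecLin =
      LinearMap.range (U.submatrix id (Fin.castLE hrn)).mulVecLin)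
    (hσr : 0 < singularValues A ⟨r - 1, by omega⟩) :
    ∀ i : Fin r,
      singularValues (A * tV * pinv (tUᵀ * A * tV) * (tUᵀ * A)) (Fin.castLE hrn i) =
        singularValues A (Fin.castLE hrn i) := by
  intro i
  set s : Fin n → ℝ := singularValues A with hs
  have hAnti : Antitone s := singularValues_antitone A
  have hsnn : ∀ j, 0 ≤ s j := fun j => singularValues_nonneg A j
  have hspos : ∀ j : Fin r, 0 < s (Fin.castLE hrn j) := by
    intro j
    refine lt_of_lt_of_le hσr (hAnti ?_)
    rw [Fin.le_def]
    simp only [Fin.coe_castLE]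
    omega
  -- the orthonormal leading blocks
  set V₁ : Matrix (Fin n) (Fin r) ℝ := V * Fm hrn with hV₁
  set U₁ : Matrix (Fin m) (Fin r) ℝ := U * Fm hrn with hU₁
  have hV₁sub : V₁ = V.submatrix id (Fin.castLE hrn) := mul_Fm hrn V
  have hU₁sub : U₁ = U.submatrix id (Fin.castLE hrn) := mul_Fm hrn U
  have hV₁tV₁ : V₁ᵀ * V₁ = 1 := by
    rw [hV₁, transpose_mul, Matrix.mul_assoc, ← Matrix.mul_assoc Vᵀ, hV, Matrix.one_mul, Fmt_mul_Fm]
  have hU₁tU₁ : U₁ᵀ * U₁ = 1 := by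
    rw [hU₁, transpose_mul, Matrix.mul_assoc, ← Matrix.mul_assoc Uᵀ, hU, Matrix.one_mul, Fmt_mul_Fm]
  -- projection facts
  have hprojV : V₁ * (V₁ᵀ * tV) = tV := by
    apply eq_of_mulVec_eq
    intro v
    have hmem : tV *ᵥ v ∈ LinearMap.range (V.submatrix id (Fin.castLE hrn)).mulVecLin := by
      rw [← hspanV]; exact ⟨v, rfl⟩
    obtain ⟨c, hc⟩ := hmem
    rw [Matrix.mulVecLin_apply, ← hV₁sub] at hc
    calc (V₁ * (V₁ᵀ * tV)) *ᵥ v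
        = V₁ *ᵥ (V₁ᵀ *ᵥ (tV *ᵥ v)) := by
          rw [mulVec_mulVec, mulVec_mulVec, ← Matrix.mul_assoc]
      _ = V₁ *ᵥ (V₁ᵀ *ᵥ (V₁ *ᵥ c)) := by rw [hc]
      _ = ((V₁ * V₁ᵀ) * V₁) *ᵥ c := by rw [mulVec_mulVec, mulVec_mulVec]
      _ = tV *ᵥ v := by rw [Matrix.mul_assoc, hV₁tV₁, Matrix.mul_one, hc]
  have hprojU : U₁ * (U₁ᵀ * tU) = tU := by
    apply eq_of_mulVec_eq
    intro v
    have hmem : tU *ᵥ v ∈ LinearMap.range (U.submatrix id (Fin.castLE hrn)).mulVecLin := by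
      rw [← hspanU]; exact ⟨v, rfl⟩
    obtain ⟨c, hc⟩ := hmem
    rw [Matrix.mulVecLin_apply, ← hU₁sub] at hc
    calc (U₁ * (U₁ᵀ * tU)) *ᵥ v
        = U₁ *ᵥ (U₁ᵀ *ᵥ (tU *ᵥ v)) := by
          rw [mulVec_mulVec, mulVec_mulVec, ← Matrix.mul_assoc]
      _ = U₁ *ᵥ (U₁ᵀ *ᵥ (U₁ *ᵥ c)) := by rw [hc]
      _ = ((U₁ * U₁ᵀ) * U₁) *ᵥ c := by rw [mulVec_mulVec, mulVec_mulVec]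
      _ = tU *ᵥ v := by rw [Matrix.mul_assoc, hU₁tU₁, Matrix.mul_one, hc]
  set Q : Matrix (Fin r) (Fin r) ℝ := V₁ᵀ * tV with hQdef
  set P : Matrix (Fin r) (Fin r) ℝ := U₁ᵀ * tU with hPdef
  have htVQ : tV = V₁ * Q := hprojV.symm
  have htUP : tU = U₁ * P := hprojU.symm
  have hQQ : Qᵀ * Q = 1 := by
    have h1 : tVᵀ * tV = Qᵀ * Q := by
      rw [htVQ, transpose_mul, Matrix.mul_assoc, ← Matrix.mul_assoc V₁ᵀ, hV₁tV₁, Matrix.one_mul]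
    rw [← h1, htV]
  have hPP : Pᵀ * P = 1 := by
    have h1 : tUᵀ * tU = Pᵀ * P := by
      rw [htUP, transpose_mul, Matrix.mul_assoc, ← Matrix.mul_assoc U₁ᵀ, hU₁tU₁, Matrix.one_mul]
    rw [← h1, htU]
  have hQdet : IsUnit Q.det := Matrix.isUnit_det_of_left_inverse hQQ
  have hPdet : IsUnit P.det := Matrix.isUnit_det_of_left_inverse hPP
  have hPtdet : IsUnit Pᵀ.det := by rwa [det_transpose]
  -- the diagonal block
  set S1 : Matrix (Fin r) (Fin r) ℝ := Matrix.diagonal (s ∘ Fin.castLE hrn) with hS1def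
  have hS1det : IsUnit S1.det := by
    rw [hS1def, det_diagonal]
    refine isUnit_iff_ne_zero.mpr (Finset.prod_ne_zero_iff.mpr fun j _ => ?_)
    exact (hspos j).ne'
  -- key products
  have hAV₁ : A * V₁ = U₁ * S1 := by
    rw [hV₁]
    conv_lhs => rw [hSVD]
    rw [← Matrix.mul_assoc, Matrix.mul_assoc (U * Matrix.diagonal fun i => s i) Vᵀ V, hV, Matrix.mul_one,
      Matrix.mul_assoc, diagonal_mul_Fm, ← Matrix.mul_assoc, hU₁, hS1def]
  have hU₁A : U₁ᵀ * A = S1 * V₁ᵀ := by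
    rw [hU₁, transpose_mul]
    conv_lhs => rw [hSVD]
    have hFd : (Fm hrn)ᵀ * Matrix.diagonal (fun i => s i)
        = S1 * (Fm hrn)ᵀ := by
      have := congrArg Matrix.transpose (diagonal_mul_Fm hrn s)
      rwa [transpose_mul, transpose_mul, diagonal_transpose, diagonal_transpose] at this
    calc (Fm hrn)ᵀ * Uᵀ * (U * Matrix.diagonal (fun i => s i) * Vᵀ)
        = (Fm hrn)ᵀ * (Uᵀ * U) * (Matrix.diagonal (fun i => s i) * Vᵀ) := by
          simp only [Matrix.mul_assoc]
      _ = (Fm hrn)ᵀ * Matrix.diagonal (fun i => s i) * Vᵀ := by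
          rw [hU, Matrix.mul_one, Matrix.mul_assoc]
      _ = S1 * (Fm hrn)ᵀ * Vᵀ := by rw [hFd]
      _ = S1 * V₁ᵀ := by rw [hV₁, transpose_mul, Matrix.mul_assoc]
  have hAtV : A * tV = U₁ * S1 * Q := by
    rw [htVQ, ← Matrix.mul_assoc, hAV₁]
  have htUA : tUᵀ * A = Pᵀ * (S1 * V₁ᵀ) := by
    rw [htUP, transpose_mul, Matrix.mul_assoc, hU₁A]
  have hB : tUᵀ * A * tV = Pᵀ * S1 * Q := by
    rw [htUA, htVQ]
    calc Pᵀ * (S1 * V₁ᵀ) * (V₁ * Q)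
        = Pᵀ * S1 * (V₁ᵀ * V₁) * Q := by simp only [Matrix.mul_assoc]
      _ = Pᵀ * S1 * Q := by rw [hV₁tV₁, Matrix.mul_one]
  have hBdet : IsUnit (tUᵀ * A * tV).det := by
    rw [hB, det_mul, det_mul]
    exact (hPtdet.mul hS1det).mul hQdet
  -- the Nyström approximation equals the truncated SVD
  set s' : Fin n → ℝ := fun j => if (j : ℕ) < r then s j else 0 with hs'def
  have hs'nn : ∀ j, 0 ≤ s' j := by
    intro j
    rw [hs'def]
    dsimp only
    split
    · exact hsnn j
    · exact le_refl 0
  have hX : A * tV * pinv (tUᵀ * A * tV) * (tUᵀ * A) = U * Matrix.diagonal s' * Vᵀ := by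
    rw [pinv_of_isUnit _ hBdet, hB, hAtV, htUA, Matrix.mul_inv_rev]
    calc U₁ * S1 * Q * (Q⁻¹ * ((Pᵀ * S1)⁻¹)) * (Pᵀ * (S1 * V₁ᵀ))
        = U₁ * (S1 * (Q * (Q⁻¹ * (S1⁻¹ * (Pᵀ⁻¹ * (Pᵀ * (S1 * V₁ᵀ))))))) := by
          rw [Matrix.mul_inv_rev]
          simp only [Matrix.mul_assoc]
      _ = U₁ * (S1 * (S1⁻¹ * (Pᵀ⁻¹ * (Pᵀ * (S1 * V₁ᵀ))))) := by
          rw [Matrix.mul_nonsing_inv_cancel_left _ _ hQdet]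
      _ = U₁ * (Pᵀ⁻¹ * (Pᵀ * (S1 * V₁ᵀ))) := by
          rw [Matrix.mul_nonsing_inv_cancel_left _ _ hS1det]
      _ = U₁ * (S1 * V₁ᵀ) := by
          rw [Matrix.nonsing_inv_mul_cancel_left _ _ hPtdet]
      _ = U * (Fm hrn * Matrix.diagonal (s ∘ Fin.castLE hrn)) * ((Fm hrn)ᵀ * Vᵀ) := by
          rw [hU₁, hV₁, hS1def, transpose_mul]
          simp only [Matrix.mul_assoc]
      _ = U * (Matrix.diagonal (fun i => s i) * (Fm hrn * (Fm hrn)ᵀ)) * Vᵀ := by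
          rw [(diagonal_mul_Fm hrn s).symm]
          simp only [Matrix.mul_assoc]
      _ = U * Matrix.diagonal s' * Vᵀ := by
          rw [Fm_mul_Fmt, diagonal_mul_diagonal]
          congr 1
          congr 1
          funext j
          rw [hs'def]
          by_cases h : (j : ℕ) < r <;> simp [h]
  rw [hX]
  -- spectral analysis of the truncated SVD
  set X : Matrix (Fin m) (Fin n) ℝ := U * Matrix.diagonal s' * Vᵀ with hXdef
  have hXX : Xᵀ * X = V * Matrix.diagonal (fun j => s' j * s' j) * Vᵀ := by
    rw [hXdef, transpose_mul, transpose_mul, transpose_transpose, diagonal_transpose]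
    calc V * (Matrix.diagonal s' * Uᵀ) * (U * Matrix.diagonal s' * Vᵀ)
        = V * (Matrix.diagonal s' * ((Uᵀ * U) * (Matrix.diagonal s' * Vᵀ))) := by
          simp only [Matrix.mul_assoc]
      _ = V * ((Matrix.diagonal s' * Matrix.diagonal s') * Vᵀ) := by
          rw [hU, Matrix.one_mul, Matrix.mul_assoc]
      _ = V * Matrix.diagonal (fun j => s' j * s' j) * Vᵀ := by
          rw [diagonal_mul_diagonal, Matrix.mul_assoc]
  have hH := Matrix.isHermitian_transpose_mul_self X
  set gX : Fin n → ℝ := fun j => Real.sqrt (hH.eigenvalues j) with hgX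
  have hm1 : Multiset.map hH.eigenvalues Finset.univ.val
      = Multiset.map (fun j => s' j * s' j) Finset.univ.val :=
    eigenvalues_multiset hH V _ hV' hXX
  have hm2 : Multiset.map gX Finset.univ.val = Multiset.map s' Finset.univ.val := by
    have e1 : Multiset.map gX Finset.univ.val
        = Multiset.map Real.sqrt (Multiset.map hH.eigenvalues Finset.univ.val) := by
      rw [Multiset.map_map]
      rfl
    rw [e1, hm1, Multiset.map_map]
    exact Multiset.map_congr rfl (fun x _ => Real.sqrt_mul_self (hs'nn x))
  have hm3 : (List.ofFn gX : Multiset ℝ) = (List.ofFn s' : Multiset ℝ) := by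
    rw [multiset_ofFn_eq_map, multiset_ofFn_eq_map]
    exact hm2
  have hsorteq : gX ∘ Tuple.sort gX = s' ∘ Tuple.sort s' := sort_eq_of_multiset_eq _ _ hm3
  have hs'anti : Antitone s' := by
    intro a b hab
    rw [hs'def]
    dsimp only
    by_cases hb : (b : ℕ) < r
    · have ha : (a : ℕ) < r := lt_of_le_of_lt (by exact_mod_cast hab) hb
      rw [if_pos hb, if_pos ha]
      exact hAnti hab
    · rw [if_neg hb]
      split
      · exact hsnn a
      · exact le_refl 0
  -- conclude
  have hval : singularValues X (Fin.castLE hrn i) = gX (Tuple.sort gX (Fin.castLE hrn i).rev) :=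
    rfl
  rw [hval]
  have := congrFun hsorteq ((Fin.castLE hrn i).rev)
  simp only [Function.comp_apply] at this
  rw [this, sort_antitone s' hs'anti]
  change s' _ = s _
  rw [hs'def]
  dsimp only
  rw [if_pos]
  simpa using i.isLt
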